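/- Let n > k ≥ 2, h ≥ 0, and let ξ satisfy 0 < 1-ξ'(t)² ≤ 1, ξ(t) ≥ 0, and the first integral e^((2k-n)ξ)(1-ξ'²)^k = e^(-nξ) + h. Then for any λ ≥ 2n, -λ·[(n(k-1)/(k(n-1)))·e^(-2kξ)/(1-ξ'²)^k + (n-k)/(k(n-1))] + n·e^(-2kξ)/(1-ξ'²)^(k-1) ≤ -2n(n-k)/(k(n-1)) < 0. -/

import Mathlib

set_option maxHeartbeats 1000000 in
/-- Negative upper bound for the zeroth-order coefficient of the linearized
σ_k-Yamabe operator when the spherical eigenvalue `λ ≥ 2n`. -/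
theorem zeroth_order_coefficient_bound (n k : ℕ) (hk : 2 ≤ k) (hkn : k < n)
    (h : ℝ) (hh : 0 ≤ h) (ξ : ℝ → ℝ)
    (hpos : ∀ t, 0 < 1 - (deriv ξ t) ^ 2) (hle : ∀ t, 1 - (deriv ξ t) ^ 2 ≤ 1)
    (hxi : ∀ t, 0 ≤ ξ t)
    (hfi : ∀ t, Real.exp ((2 * (k : ℝ) - n) * ξ t) * (1 - (deriv ξ t) ^ 2) ^ k
      = Real.exp (-(n : ℝ) * ξ t) + h) :
    ∀ t, ∀ lam : ℝ, 2 * (n : ℝ) ≤ lam →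
      -lam * ((n : ℝ) * ((k : ℝ) - 1) / ((k : ℝ) * ((n : ℝ) - 1))
            * Real.exp (-2 * k * ξ t) / (1 - (deriv ξ t) ^ 2) ^ k
          + ((n : ℝ) - k) / ((k : ℝ) * ((n : ℝ) - 1)))
        + (n : ℝ) * Real.exp (-2 * k * ξ t) / (1 - (deriv ξ t) ^ 2) ^ (k - 1)
      ≤ -(2 * (n : ℝ) * ((n : ℝ) - k) / ((k : ℝ) * ((n : ℝ) - 1))) ∧
      -(2 * (n : ℝ) * ((n : ℝ) - k) / ((k : ℝ) * ((n : ℝ) - 1))) < 0 := by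
  intro t lam hlam
  have hkR : (2:ℝ) ≤ (k:ℝ) := by exact_mod_cast hk
  have hknR : (k:ℝ) < (n:ℝ) := by exact_mod_cast hkn
  have hden : (0:ℝ) < (k:ℝ) * ((n:ℝ) - 1) := by nlinarith
  have hp : 0 < 1 - (deriv ξ t) ^ 2 := hpos t
  have hp1 : 1 - (deriv ξ t) ^ 2 ≤ 1 := hle t
  have hE : 0 < Real.exp (-2 * (k:ℝ) * ξ t) := Real.exp_pos _
  have hP : 0 < (1 - (deriv ξ t) ^ 2) ^ k := pow_pos hp k
  have hQ : 0 < (1 - (deriv ξ t) ^ 2) ^ (k - 1) := pow_pos hp (k - 1)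
  set a : ℝ := Real.exp (-2 * (k:ℝ) * ξ t) / (1 - (deriv ξ t) ^ 2) ^ k with ha_def
  have ha : 0 < a := div_pos hE hP
  have hpow : (1 - (deriv ξ t) ^ 2) ^ k
      = (1 - (deriv ξ t) ^ 2) ^ (k - 1) * (1 - (deriv ξ t) ^ 2) := by
    rw [← pow_succ]
    congr 1
    omega
  have hQa : (n:ℝ) * Real.exp (-2 * (k:ℝ) * ξ t) / (1 - (deriv ξ t) ^ 2) ^ (k - 1)
      = (n:ℝ) * (a * (1 - (deriv ξ t) ^ 2)) := by
    rw [ha_def, hpow]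
    field_simp
  have hmda : (n:ℝ) * ((k:ℝ) - 1) / ((k:ℝ) * ((n:ℝ) - 1))
        * Real.exp (-2 * (k:ℝ) * ξ t) / (1 - (deriv ξ t) ^ 2) ^ k
      = (n:ℝ) * ((k:ℝ) - 1) / ((k:ℝ) * ((n:ℝ) - 1)) * a := by
    rw [ha_def, mul_div_assoc]
  have hc2 : (0:ℝ) < ((n:ℝ) - (k:ℝ)) / ((k:ℝ) * ((n:ℝ) - 1)) :=
    div_pos (by linarith) hden
  have hc1 : (1:ℝ) ≤ 2 * ((n:ℝ) * ((k:ℝ) - 1) / ((k:ℝ) * ((n:ℝ) - 1))) := by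
    rw [mul_div_assoc']
    rw [le_div_iff₀ hden]
    nlinarith
  have hsum : (n:ℝ) * ((k:ℝ) - 1) / ((k:ℝ) * ((n:ℝ) - 1))
      + ((n:ℝ) - (k:ℝ)) / ((k:ℝ) * ((n:ℝ) - 1)) = 1 := by
    rw [← add_div, div_eq_one_iff_eq hden.ne']
    ring
  constructor
  · rw [hQa, hmda]
    set c1 : ℝ := (n:ℝ) * ((k:ℝ) - 1) / ((k:ℝ) * ((n:ℝ) - 1)) with hc1_def
    set c2 : ℝ := ((n:ℝ) - (k:ℝ)) / ((k:ℝ) * ((n:ℝ) - 1)) with hc2_def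
    have hgoal : -(2 * (n:ℝ) * ((n:ℝ) - (k:ℝ)) / ((k:ℝ) * ((n:ℝ) - 1)))
        = -(2 * (n:ℝ)) * c2 := by
      rw [hc2_def]; ring
    rw [hgoal]
    have hc1pos : 0 < c1 := by linarith
    have step1 : -lam * (c1 * a + c2) ≤ -(2 * (n:ℝ)) * (c1 * a + c2) := by
      have hq : 0 < c1 * a + c2 := by positivity
      nlinarith
    have step2 : (n:ℝ) * (a * (1 - (deriv ξ t) ^ 2)) ≤ (n:ℝ) * a := by
      have : a * (1 - (deriv ξ t) ^ 2) ≤ a := by nlinarith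
      have hn : (0:ℝ) ≤ (n:ℝ) := by positivity
      nlinarith
    have step3 : -(2 * (n:ℝ)) * (c1 * a + c2) + (n:ℝ) * a ≤ -(2 * (n:ℝ)) * c2 := by
      have h1 : a * 1 ≤ a * (2 * c1) := mul_le_mul_of_nonneg_left hc1 ha.le
      have hn0 : (0:ℝ) ≤ (n:ℝ) := Nat.cast_nonneg n
      have h2 : (n:ℝ) * (a * 1) ≤ (n:ℝ) * (a * (2 * c1)) :=
        mul_le_mul_of_nonneg_left h1 hn0
      linarith [h2]
    linarith
  · have : 0 < 2 * (n:ℝ) * ((n:ℝ) - (k:ℝ)) / ((k:ℝ) * ((n:ℝ) - 1)) :=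
      div_pos (by nlinarith) hden
    linarith
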